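/- Let f : [0,1] → ℝ be absolutely continuous with square-integrable derivative, and let g : [0,1] → ℝ be a step function of the form g(t) = Σ_{j=1}^p c_j 1_{(t_{j-1}, t_j]}(t) with t_j = j/p. Then for any ε > 0, the function Δ = f - g satisfies ‖Δ‖² ≤ (1+ε)‖Δ‖²_p + (1+ε⁻¹)‖f'‖²/p², where ‖Δ‖² = ∫₀¹ Δ(t)² dt and ‖Δ‖²_p = (1/p)Σ_{j=1}^p Δ(t_j)². -/

import Mathlib

open MeasureTheory intervalIntegral

/-- Cauchy–Schwarz for interval integrals. -/
lemma cs_aux {a b : ℝ} (hab : a ≤ b) {h : ℝ → ℝ}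
    (h1 : IntervalIntegrable h volume a b)
    (h2 : IntervalIntegrable (fun t => h t ^ 2) volume a b) :
    (∫ t in a..b, h t) ^ 2 ≤ (b - a) * ∫ t in a..b, h t ^ 2 := by
  set S := ∫ t in a..b, h t with hS
  set Q := ∫ t in a..b, h t ^ 2 with hQ
  have hQnn : 0 ≤ Q := intervalIntegral.integral_nonneg hab fun u _ => sq_nonneg _
  have key : ∀ l : ℝ, 0 ≤ Q - 2 * l * S + (b - a) * l ^ 2 := by
    intro l
    have h3 : IntervalIntegrable (fun t => h t ^ 2 - (2 * l) * h t) volume a b :=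
      h2.sub (h1.const_mul _)
    have hnn : (0:ℝ) ≤ ∫ t in a..b, (h t - l) ^ 2 :=
      intervalIntegral.integral_nonneg hab fun u _ => sq_nonneg _
    have heq : (fun t => (h t - l) ^ 2)
        = fun t => (h t ^ 2 - (2 * l) * h t) + l ^ 2 := by
      funext t; ring
    rw [heq, intervalIntegral.integral_add h3 intervalIntegrable_const,
      intervalIntegral.integral_sub h2 (h1.const_mul _),
      intervalIntegral.integral_const_mul, intervalIntegral.integral_const,
      smul_eq_mul] at hnn
    rw [hS, hQ]; linarith [hnn]
  rcases eq_or_lt_of_le hab with rfl | hlt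
  · simp [hS]
  · have hpos : 0 < b - a := sub_pos.mpr hlt
    have hd : (b - a) * (S / (b - a)) = S := by field_simp
    have h0 := key (S / (b - a))
    nlinarith [h0, hd, hpos, sq_nonneg (S / (b - a))]

/-- Elementary inequality `(x - y)^2 ≤ (1+ε) x^2 + (1+ε⁻¹) y^2`. -/
lemma sq_sub_le_aux {ε : ℝ} (hε : 0 < ε) (x y : ℝ) :
    (x - y) ^ 2 ≤ (1 + ε) * x ^ 2 + (1 + ε⁻¹) * y ^ 2 := by
  have hkey : 0 ≤ ε * x ^ 2 + 2 * x * y + ε⁻¹ * y ^ 2 := by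
    have h2 : ε * (ε * x ^ 2 + 2 * x * y + ε⁻¹ * y ^ 2) = (ε * x + y) ^ 2 := by
      field_simp; ring
    have h3 : 0 ≤ ε * (ε * x ^ 2 + 2 * x * y + ε⁻¹ * y ^ 2) := h2 ▸ sq_nonneg _
    exact (mul_nonneg_iff_of_pos_left hε).mp h3
  nlinarith [hkey]

theorem stmt0 (p : ℕ) (hp : 1 ≤ p) (f f' g : ℝ → ℝ) (c : ℕ → ℝ)
    (hderiv : ∀ x ∈ Set.Icc (0:ℝ) 1, HasDerivAt f (f' x) x)
    (hf'2 : IntervalIntegrable (fun t => f' t ^ 2) volume 0 1)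
    (hg : ∀ j ∈ Finset.Icc 1 p, ∀ t ∈ Set.Ioc (((j:ℝ) - 1) / p) ((j:ℝ) / p), g t = c j)
    (ε : ℝ) (hε : 0 < ε) :
    (∫ t in (0:ℝ)..1, (f t - g t) ^ 2)
      ≤ (1 + ε) * ((1 / (p:ℝ)) * ∑ j ∈ Finset.Icc 1 p, (f ((j:ℝ)/p) - g ((j:ℝ)/p)) ^ 2)
        + (1 + ε⁻¹) * (∫ t in (0:ℝ)..1, f' t ^ 2) / (p:ℝ) ^ 2 := by
  have hppos : (0:ℝ) < p := by exact_mod_cast hp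
  have hp0 : (p:ℝ) ≠ 0 := ne_of_gt hppos
  set a : ℕ → ℝ := fun k => (k : ℝ) / p with ha
  have ha0 : a 0 = 0 := by simp [ha]
  have hap : a p = 1 := by simp only [ha]; exact div_self hp0
  have hamono : ∀ k : ℕ, a k ≤ a (k + 1) := by
    intro k
    simp only [ha]
    gcongr
    push_cast; linarith
  have haIcc : ∀ k : ℕ, k ≤ p → a k ∈ Set.Icc (0:ℝ) 1 := by
    intro k hk
    constructor
    · positivity
    · rw [ha, div_le_one hppos]; exact_mod_cast hk
  have hBA : ∀ k : ℕ, a (k + 1) - a k = 1 / p := by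
    intro k
    simp only [ha]; push_cast; field_simp; ring
  have huIcc : ∀ u v : ℝ, u ∈ Set.Icc (0:ℝ) 1 → v ∈ Set.Icc (0:ℝ) 1 →
      Set.uIcc u v ⊆ Set.Icc (0:ℝ) 1 := fun u v hu hv => Set.uIcc_subset_Icc hu hv
  have hfc : ContinuousOn f (Set.Icc (0:ℝ) 1) :=
    fun x hx => (hderiv x hx).continuousAt.continuousWithinAt
  -- f'^2 is interval integrable on subintervals of [0,1]
  have hsub2 : ∀ u v : ℝ, u ∈ Set.Icc (0:ℝ) 1 → v ∈ Set.Icc (0:ℝ) 1 →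
      IntervalIntegrable (fun t => f' t ^ 2) volume u v := by
    intro u v hu hv
    apply hf'2.mono_set
    rw [Set.uIcc_of_le (by norm_num : (0:ℝ) ≤ 1)]
    exact huIcc u v hu hv
  -- f' is interval integrable on subintervals of [0,1]
  have hf'int : ∀ u v : ℝ, u ∈ Set.Icc (0:ℝ) 1 → v ∈ Set.Icc (0:ℝ) 1 →
      IntervalIntegrable f' volume u v := by
    intro u v hu hv
    have hsubI : Set.uIoc u v ⊆ Set.Icc (0:ℝ) 1 :=
      Set.Subset.trans Set.uIoc_subset_uIcc (huIcc u v hu hv)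
    have hQ : IntervalIntegrable (fun t => f' t ^ 2 + 1) volume u v :=
      (hsub2 u v hu hv).add intervalIntegrable_const
    apply hQ.mono_fun' ?_ ?_
    · refine ((measurable_deriv f).aestronglyMeasurable.restrict).congr ?_
      exact ae_restrict_of_forall_mem measurableSet_uIoc
        fun x hx => ((hderiv x (hsubI hx)).deriv)
    · refine ae_restrict_of_forall_mem measurableSet_uIoc fun x _ => ?_
      simp only [Real.norm_eq_abs]
      nlinarith [sq_nonneg (|f' x| - 1), sq_abs (f' x), abs_nonneg (f' x)]
  -- per-interval estimate
  have key : ∀ k, k < p →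
      (∫ t in a k..a (k + 1), (f t - g t) ^ 2)
        ≤ (1 + ε) * (f (a (k + 1)) - c (k + 1)) ^ 2 / p
          + (1 + ε⁻¹) * (∫ t in a k..a (k + 1), f' t ^ 2) / (p:ℝ) ^ 2 := by
    intro k hk
    set A := a k with hA'
    set B := a (k + 1) with hB'
    have hA : A ∈ Set.Icc (0:ℝ) 1 := haIcc k hk.le
    have hB : B ∈ Set.Icc (0:ℝ) 1 := haIcc (k + 1) hk
    have hABle : A ≤ B := hamono k
    have hdiff : B - A = 1 / p := hBA k
    have hABlt : A < B := by
      have : (0:ℝ) < 1 / p := by positivity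
      linarith
    have hkmem : k + 1 ∈ Finset.Icc 1 p := by
      simp only [Finset.mem_Icc]; omega
    have hgc : ∀ t ∈ Set.Ioc A B, g t = c (k + 1) := by
      intro t ht
      have hcast : ((((k:ℕ) + 1 : ℕ):ℝ) - 1) / p = A ∧ (((k:ℕ) + 1 : ℕ):ℝ) / p = B := by
        constructor <;> (simp only [hA', hB', ha]; try push_cast; try ring)
      have := hg (k + 1) hkmem t (by rw [hcast.1, hcast.2]; exact ht)
      exact this
    have hgB : g B = c (k + 1) := hgc B ⟨hABlt, le_refl _⟩
    -- replace g by the constant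
    have e1 : (∫ t in A..B, (f t - g t) ^ 2) = ∫ t in A..B, (f t - c (k + 1)) ^ 2 := by
      apply intervalIntegral.integral_congr_ae
      refine Filter.Eventually.of_forall fun x hx => ?_
      rw [Set.uIoc_of_le hABle] at hx
      rw [hgc x hx]
    have hcont : ContinuousOn (fun t => (f t - c (k + 1)) ^ 2) (Set.uIcc A B) :=
      (((hfc.mono (huIcc A B hA hB)).sub continuousOn_const).pow 2)
    have hfint : IntervalIntegrable (fun t => (f t - c (k + 1)) ^ 2) volume A B :=
      hcont.intervalIntegrable
    set K := (1 + ε) * (f B - c (k + 1)) ^ 2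
        + (1 + ε⁻¹) * ((1 / p) * ∫ s in A..B, f' s ^ 2) with hK
    have hpt : ∀ t ∈ Set.Icc A B, (f t - c (k + 1)) ^ 2 ≤ K := by
      intro t ht
      have htI : t ∈ Set.Icc (0:ℝ) 1 :=
        ⟨le_trans hA.1 ht.1, le_trans ht.2 hB.2⟩
      have hftc : (∫ s in t..B, f' s) = f B - f t := by
        apply intervalIntegral.integral_eq_sub_of_hasDerivAt
        · intro x hx
          exact hderiv x (huIcc t B htI hB hx)
        · exact hf'int t B htI hB
      have hy2 : (f B - f t) ^ 2 ≤ (1 / p) * ∫ s in A..B, f' s ^ 2 := by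
        rw [← hftc]
        have hcs := cs_aux ht.2 (hf'int t B htI hB) (hsub2 t B htI hB)
        have hmono : (∫ s in t..B, f' s ^ 2) ≤ ∫ s in A..B, f' s ^ 2 := by
          apply intervalIntegral.integral_mono_interval ht.1 ht.2 le_rfl
          · exact Filter.Eventually.of_forall fun s => sq_nonneg _
          · exact hsub2 A B hA hB
        have h2 : (0:ℝ) ≤ ∫ s in t..B, f' s ^ 2 :=
          intervalIntegral.integral_nonneg ht.2 fun u _ => sq_nonneg _
        have h1 : B - t ≤ 1 / p := by linarith [ht.1]
        calc (∫ s in t..B, f' s) ^ 2 ≤ (B - t) * ∫ s in t..B, f' s ^ 2 := hcs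
          _ ≤ (1 / p) * ∫ s in A..B, f' s ^ 2 := by
              apply mul_le_mul h1 hmono h2 (by positivity)
      have halg := sq_sub_le_aux hε (f B - c (k + 1)) (f B - f t)
      have hεinv : (0:ℝ) ≤ 1 + ε⁻¹ := by positivity
      calc (f t - c (k + 1)) ^ 2 = ((f B - c (k + 1)) - (f B - f t)) ^ 2 := by ring
        _ ≤ (1 + ε) * (f B - c (k + 1)) ^ 2 + (1 + ε⁻¹) * (f B - f t) ^ 2 := halg
        _ ≤ K := by
            rw [hK]
            have := mul_le_mul_of_nonneg_left hy2 hεinv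
            linarith
    have e2 : (∫ t in A..B, (f t - c (k + 1)) ^ 2) ≤ (B - A) * K := by
      calc (∫ t in A..B, (f t - c (k + 1)) ^ 2)
          ≤ ∫ _ in A..B, K :=
            intervalIntegral.integral_mono_on hABle hfint intervalIntegrable_const hpt
        _ = (B - A) * K := by rw [intervalIntegral.integral_const, smul_eq_mul]
    rw [e1]
    refine le_trans e2 (le_of_eq ?_)
    rw [hdiff, hK]
    field_simp
  -- integrability of (f - g)^2 on each subinterval
  have hDint : ∀ k, k < p →
      IntervalIntegrable (fun t => (f t - g t) ^ 2) volume (a k) (a (k + 1)) := by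
    intro k hk
    have hA : a k ∈ Set.Icc (0:ℝ) 1 := haIcc k hk.le
    have hB : a (k + 1) ∈ Set.Icc (0:ℝ) 1 := haIcc (k + 1) hk
    have hABle : a k ≤ a (k + 1) := hamono k
    have hcont : ContinuousOn (fun t => (f t - c (k + 1)) ^ 2) (Set.uIcc (a k) (a (k + 1))) :=
      (((hfc.mono (huIcc _ _ hA hB)).sub continuousOn_const).pow 2)
    apply hcont.intervalIntegrable.congr
    intro t ht
    rw [Set.uIoc_of_le hABle] at ht
    have hkmem : k + 1 ∈ Finset.Icc 1 p := by simp only [Finset.mem_Icc]; omega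
    have hcast : ((((k:ℕ) + 1 : ℕ):ℝ) - 1) / p = a k ∧ (((k:ℕ) + 1 : ℕ):ℝ) / p = a (k + 1) := by
      constructor <;> (simp only [ha]; try push_cast; try ring)
    show (f t - c (k + 1)) ^ 2 = (f t - g t) ^ 2
    rw [hg (k + 1) hkmem t (by rw [hcast.1, hcast.2]; exact ht)]
  -- split the integrals
  have hsum1 : (∑ k ∈ Finset.range p, ∫ t in a k..a (k + 1), (f t - g t) ^ 2)
      = ∫ t in (0:ℝ)..1, (f t - g t) ^ 2 := by
    rw [intervalIntegral.sum_integral_adjacent_intervals hDint, ha0, hap]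
  have hsum2 : (∑ k ∈ Finset.range p, ∫ t in a k..a (k + 1), f' t ^ 2)
      = ∫ t in (0:ℝ)..1, f' t ^ 2 := by
    rw [intervalIntegral.sum_integral_adjacent_intervals
      (fun k hk => hsub2 (a k) (a (k + 1)) (haIcc k hk.le) (haIcc (k + 1) hk)), ha0, hap]
  -- rewrite the goal sum
  have hgoalsum : (∑ j ∈ Finset.Icc 1 p, (f ((j:ℝ)/p) - g ((j:ℝ)/p)) ^ 2)
      = ∑ k ∈ Finset.range p, (f (a (k + 1)) - c (k + 1)) ^ 2 := by
    rw [← Finset.Ico_add_one_right_eq_Icc, Finset.sum_Ico_eq_sum_range]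
    try simp only [Nat.add_sub_cancel]
    apply Finset.sum_congr rfl
    intro k hk
    have hkmem : 1 + k ∈ Finset.Icc 1 p := by
      simp only [Finset.mem_range] at hk
      simp only [Finset.mem_Icc]; omega
    have hcA : (((1 + k : ℕ):ℝ) - 1) / p = a k := by push_cast; ring
    have hcB : ((1 + k : ℕ):ℝ) / p = a (k + 1) := by simp only [ha]; push_cast; ring
    have hmem : ((1 + k : ℕ):ℝ) / p ∈ Set.Ioc ((((1 + k : ℕ):ℝ) - 1) / p) (((1 + k : ℕ):ℝ) / p) := by
      constructor
      · rw [hcA, hcB]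
        have : (0:ℝ) < 1 / p := by positivity
        linarith [hBA k]
      · exact le_refl _
    rw [hg (1 + k) hkmem _ hmem, hcB]
    have : (1 + k : ℕ) = k + 1 := by omega
    rw [this]
  -- put everything together
  rw [← hsum1, ← hsum2, hgoalsum]
  calc (∑ k ∈ Finset.range p, ∫ t in a k..a (k + 1), (f t - g t) ^ 2)
      ≤ ∑ k ∈ Finset.range p, ((1 + ε) * (f (a (k + 1)) - c (k + 1)) ^ 2 / p
          + (1 + ε⁻¹) * (∫ t in a k..a (k + 1), f' t ^ 2) / (p:ℝ) ^ 2) :=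
        Finset.sum_le_sum fun k hk => key k (Finset.mem_range.mp hk)
    _ = (1 + ε) * ((1 / (p:ℝ)) * ∑ k ∈ Finset.range p, (f (a (k + 1)) - c (k + 1)) ^ 2)
          + (1 + ε⁻¹) * (∑ k ∈ Finset.range p, ∫ t in a k..a (k + 1), f' t ^ 2) / (p:ℝ) ^ 2 := by
        rw [Finset.sum_add_distrib]
        congr 1
        · rw [Finset.mul_sum, Finset.mul_sum]
          exact Finset.sum_congr rfl fun k _ => by ring
        · rw [Finset.mul_sum, Finset.sum_div]
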